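/- (Green's identity with transmission and boundary corrections, single interface case n = 1.) Let a < ξ < b, and let f, g be twice continuously differentiable on [a, ξ] and on [ξ, b] (with one-sided limits at ξ), with ℓᵢu = −ρᵢ²u'' + qu on each subinterval, ρ₁, ρ₂ ≠ 0. Suppose at the interface θ34·W(f, conj g; ξ−) = θ12·W(f, conj g; ξ+) with θ12, θ34 > 0. Then θ34·(1/ρ₁²)∫_a^ξ [(ℓ₁f)conj(g) − f·conj(ℓ₁g)] dx + θ12·(1/ρ₂²)∫_ξ^b [(ℓ₂f)conj(g) − f·conj(ℓ₂g)] dx = θ12·W(f, conj g; b) − θ34·W(f, conj g; a). -/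

import Mathlib

open intervalIntegral

lemma wronskian_integral (c d : ℝ) (hcd : c ≤ d) (f f' f'' g g' g'' : ℝ → ℂ)
    (hf : ∀ x ∈ Set.Icc c d, HasDerivAt f (f' x) x)
    (hf' : ∀ x ∈ Set.Icc c d, HasDerivAt f' (f'' x) x)
    (hf'' : ContinuousOn f'' (Set.Icc c d))
    (hg : ∀ x ∈ Set.Icc c d, HasDerivAt g (g' x) x)
    (hg' : ∀ x ∈ Set.Icc c d, HasDerivAt g' (g'' x) x)
    (hg'' : ContinuousOn g'' (Set.Icc c d)) :
    ∫ x in c..d, (f x * (starRingEnd ℂ) (g'' x) - f'' x * (starRingEnd ℂ) (g x))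
      = (f d * (starRingEnd ℂ) (g' d) - f' d * (starRingEnd ℂ) (g d))
        - (f c * (starRingEnd ℂ) (g' c) - f' c * (starRingEnd ℂ) (g c)) := by
  have hu : Set.uIcc c d = Set.Icc c d := Set.uIcc_of_le hcd
  have hcf : ContinuousOn f (Set.Icc c d) := fun x hx => (hf x hx).continuousAt.continuousWithinAt
  have hcf' : ContinuousOn f' (Set.Icc c d) := fun x hx => (hf' x hx).continuousAt.continuousWithinAt
  have hcg : ContinuousOn g (Set.Icc c d) := fun x hx => (hg x hx).continuousAt.continuousWithinAt
  have hcg' : ContinuousOn g' (Set.Icc c d) := fun x hx => (hg' x hx).continuousAt.continuousWithinAt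
  apply integral_eq_sub_of_hasDerivAt
  · intro x hx
    rw [hu] at hx
    have h1 : HasDerivAt (fun x => f x * (starRingEnd ℂ) (g' x))
        (f x * (starRingEnd ℂ) (g'' x) + f' x * (starRingEnd ℂ) (g' x)) x := by
      have := (hf x hx).mul ((hg' x hx).star)
      exact this.congr_deriv (by rw [add_comm]; rfl)
    have h2 : HasDerivAt (fun x => f' x * (starRingEnd ℂ) (g x))
        (f' x * (starRingEnd ℂ) (g' x) + f'' x * (starRingEnd ℂ) (g x)) x := by
      have := (hf' x hx).mul ((hg x hx).star)
      exact this.congr_deriv (by rw [add_comm]; rfl)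
    have := h1.sub h2
    refine this.congr_deriv ?_
    ring
  · apply ContinuousOn.intervalIntegrable
    rw [hu]
    exact (hcf.mul (Complex.continuous_conj.comp_continuousOn hg'')).sub
      (hf''.mul (Complex.continuous_conj.comp_continuousOn hcg))

/-- Green's identity with transmission and boundary corrections (one interface).
The two smooth pieces of f and g on [a,ξ] and [ξ,b] are denoted f₁, f₂, g₁, g₂,
so that one-sided limits at ξ are the values of the pieces at ξ. -/
theorem greens_identity_transmission
    (a ξ b : ℝ) (haξ : a < ξ) (hξb : ξ < b)
    (ρ₁ ρ₂ : ℝ) (hρ₁ : ρ₁ ≠ 0) (hρ₂ : ρ₂ ≠ 0)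
    (q : ℝ → ℝ) (hq₁ : ContinuousOn q (Set.Icc a ξ)) (hq₂ : ContinuousOn q (Set.Icc ξ b))
    (θ12 θ34 : ℝ) (hθ12 : 0 < θ12) (hθ34 : 0 < θ34)
    (f₁ f₁' f₁'' g₁ g₁' g₁'' f₂ f₂' f₂'' g₂ g₂' g₂'' : ℝ → ℂ)
    (hf₁ : ∀ x ∈ Set.Icc a ξ, HasDerivAt f₁ (f₁' x) x)
    (hf₁' : ∀ x ∈ Set.Icc a ξ, HasDerivAt f₁' (f₁'' x) x)
    (hf₁'' : ContinuousOn f₁'' (Set.Icc a ξ))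
    (hg₁ : ∀ x ∈ Set.Icc a ξ, HasDerivAt g₁ (g₁' x) x)
    (hg₁' : ∀ x ∈ Set.Icc a ξ, HasDerivAt g₁' (g₁'' x) x)
    (hg₁'' : ContinuousOn g₁'' (Set.Icc a ξ))
    (hf₂ : ∀ x ∈ Set.Icc ξ b, HasDerivAt f₂ (f₂' x) x)
    (hf₂' : ∀ x ∈ Set.Icc ξ b, HasDerivAt f₂' (f₂'' x) x)
    (hf₂'' : ContinuousOn f₂'' (Set.Icc ξ b))
    (hg₂ : ∀ x ∈ Set.Icc ξ b, HasDerivAt g₂ (g₂' x) x)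
    (hg₂' : ∀ x ∈ Set.Icc ξ b, HasDerivAt g₂' (g₂'' x) x)
    (hg₂'' : ContinuousOn g₂'' (Set.Icc ξ b))
    -- interface Wronskian relation: θ34·W(f, conj g; ξ−) = θ12·W(f, conj g; ξ+)
    (hint : (θ34 : ℂ) * (f₁ ξ * (starRingEnd ℂ) (g₁' ξ) - f₁' ξ * (starRingEnd ℂ) (g₁ ξ))
          = (θ12 : ℂ) * (f₂ ξ * (starRingEnd ℂ) (g₂' ξ) - f₂' ξ * (starRingEnd ℂ) (g₂ ξ))) :
    (θ34 : ℂ) * ((1 : ℂ) / (ρ₁ : ℂ)^2) *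
        (∫ x in a..ξ,
          ((-(ρ₁ : ℂ)^2 * f₁'' x + (q x : ℂ) * f₁ x) * (starRingEnd ℂ) (g₁ x)
            - f₁ x * (starRingEnd ℂ) (-(ρ₁ : ℂ)^2 * g₁'' x + (q x : ℂ) * g₁ x)))
      + (θ12 : ℂ) * ((1 : ℂ) / (ρ₂ : ℂ)^2) *
        (∫ x in ξ..b,
          ((-(ρ₂ : ℂ)^2 * f₂'' x + (q x : ℂ) * f₂ x) * (starRingEnd ℂ) (g₂ x)
            - f₂ x * (starRingEnd ℂ) (-(ρ₂ : ℂ)^2 * g₂'' x + (q x : ℂ) * g₂ x)))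
      = (θ12 : ℂ) * (f₂ b * (starRingEnd ℂ) (g₂' b) - f₂' b * (starRingEnd ℂ) (g₂ b))
        - (θ34 : ℂ) * (f₁ a * (starRingEnd ℂ) (g₁' a) - f₁' a * (starRingEnd ℂ) (g₁ a)) := by
  
  have h1 := wronskian_integral a ξ haξ.le f₁ f₁' f₁'' g₁ g₁' g₁'' hf₁ hf₁' hf₁'' hg₁ hg₁' hg₁''
  have h2 := wronskian_integral ξ b hξb.le f₂ f₂' f₂'' g₂ g₂' g₂'' hf₂ hf₂' hf₂'' hg₂ hg₂' hg₂''
  have e1 : (∫ x in a..ξ,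
          ((-(ρ₁ : ℂ)^2 * f₁'' x + (q x : ℂ) * f₁ x) * (starRingEnd ℂ) (g₁ x)
            - f₁ x * (starRingEnd ℂ) (-(ρ₁ : ℂ)^2 * g₁'' x + (q x : ℂ) * g₁ x)))
      = (ρ₁ : ℂ)^2 * ∫ x in a..ξ, (f₁ x * (starRingEnd ℂ) (g₁'' x) - f₁'' x * (starRingEnd ℂ) (g₁ x)) := by
    rw [← intervalIntegral.integral_const_mul]
    apply intervalIntegral.integral_congr
    intro x hx
    simp only [map_add, map_mul, map_neg, map_pow, Complex.conj_ofReal]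
    ring
  have e2 : (∫ x in ξ..b,
          ((-(ρ₂ : ℂ)^2 * f₂'' x + (q x : ℂ) * f₂ x) * (starRingEnd ℂ) (g₂ x)
            - f₂ x * (starRingEnd ℂ) (-(ρ₂ : ℂ)^2 * g₂'' x + (q x : ℂ) * g₂ x)))
      = (ρ₂ : ℂ)^2 * ∫ x in ξ..b, (f₂ x * (starRingEnd ℂ) (g₂'' x) - f₂'' x * (starRingEnd ℂ) (g₂ x)) := by
    rw [← intervalIntegral.integral_const_mul]
    apply intervalIntegral.integral_congr
    intro x hx
    simp only [map_add, map_mul, map_neg, map_pow, Complex.conj_ofReal]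
    ring
  rw [e1, e2, h1, h2]
  have hρ₁' : (ρ₁ : ℂ) ≠ 0 := Complex.ofReal_ne_zero.mpr hρ₁
  have hρ₂' : (ρ₂ : ℂ) ≠ 0 := Complex.ofReal_ne_zero.mpr hρ₂
  field_simp
  linear_combination hint
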